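/- arXiv:2503.10126 — 4 statements merged into one kernel-verified Lean document; each statement's English description precedes it below -/
import Mathlib

section
/- Let f : ℝ^N → (-∞,∞] be a proper separable function, f(x) = Σ_{n=1}^N f_n(x_n) with each f_n proper. Then x* = (x*_1,…,x*_N) is an isolated local minimizer of f if and only if every x*_n is an isolated local minimizer of f_n. -/
/-!
The only link between `F z = ∑ i, f i (z i)` and its summands is the identity
`F (update y i t) = f i t + ∑_{j ≠ i} f j (y j)`. At a local minimizer `y` of `F` the sum is finite, so
(as no summand is `⊥`) the constant `∑_{j ≠ i} f j (y j)` is a real number and can be cancelled: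
`y` is a local minimizer of `F` iff each `y i` is one of `f i`. Isolation then transfers along
the coordinate lines `t ↦ update y i t` in one direction and through product neighbourhoods in the
other.
-/

open Filter Topology

/-- A point `a` is a local minimizer of the `(-∞,∞]`-valued function `f`
(in particular `a ∈ dom f`). -/
def IsLocalMinimizer {α : Type*} [TopologicalSpace α] (f : α → EReal) (a : α) : Prop :=
  f a ≠ ⊤ ∧ ∀ᶠ x in nhds a, f a ≤ f x

/-- `a` is an isolated local minimizer of `f`: it is a local minimizer and it is the
only local minimizer of `f` in some open neighborhood of `a`. -/
def IsIsolatedLocalMinimizer {α : Type*} [TopologicalSpace α] (f : α → EReal) (a : α) : Prop :=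
  IsLocalMinimizer f a ∧
    ∃ U ∈ nhds a, ∀ y ∈ U, IsLocalMinimizer f y → y = a

/-- `f` is proper: it never takes the value `-∞` and is somewhere finite. -/
def ProperFun {α : Type*} (f : α → EReal) : Prop :=
  (∀ x, f x ≠ ⊥) ∧ ∃ x, f x ≠ ⊤

open Finset

namespace EReal

variable {ι : Type*} {s : Finset ι} {g : ι → EReal}

lemma sum_ne_bot (h : ∀ i ∈ s, g i ≠ ⊥) : ∑ i ∈ s, g i ≠ ⊥ :=
  sum_induction g (· ≠ ⊥) (fun _ _ ha hb => add_ne_bot_iff.2 ⟨ha, hb⟩) zero_ne_bot h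

lemma sum_ne_top (h : ∀ i ∈ s, g i ≠ ⊤) : ∑ i ∈ s, g i ≠ ⊤ :=
  sum_induction g (· ≠ ⊤) (fun _ _ ha hb => (add_lt_top ha hb).ne) zero_ne_top h

lemma ne_top_of_sum_ne_top [DecidableEq ι] (hbot : ∀ i ∈ s, g i ≠ ⊥) (h : ∑ i ∈ s, g i ≠ ⊤)
    {i : ι} (hi : i ∈ s) : g i ≠ ⊤ := by
  intro hi_top
  rw [← add_sum_erase s g hi, hi_top,
    top_add_of_ne_bot (sum_ne_bot fun j hj => hbot j (mem_of_mem_erase hj))] at h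
  exact h rfl

end EReal

section Homeomorph

variable {α β : Type*} [TopologicalSpace α] [TopologicalSpace β] (e : α ≃ₜ β) {f : β → EReal}
  {a : α}

theorem Homeomorph.isLocalMinimizer_comp_iff :
    IsLocalMinimizer (f ∘ e) a ↔ IsLocalMinimizer f (e a) := by
  simp only [IsLocalMinimizer, Function.comp_apply, ← e.map_nhds_eq, eventually_map]

theorem IsIsolatedLocalMinimizer.comp_homeomorph (h : IsIsolatedLocalMinimizer f (e a)) :
    IsIsolatedLocalMinimizer (f ∘ e) a := by
  obtain ⟨hmin, U, hU, huniq⟩ := h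
  exact ⟨e.isLocalMinimizer_comp_iff.2 hmin, e ⁻¹' U, e.continuous.continuousAt hU,
    fun y hy hmin_y => e.injective (huniq _ hy (e.isLocalMinimizer_comp_iff.1 hmin_y))⟩

theorem Homeomorph.isIsolatedLocalMinimizer_comp_iff :
    IsIsolatedLocalMinimizer (f ∘ e) a ↔ IsIsolatedLocalMinimizer f (e a) := by
  refine ⟨fun h => ?_, (·.comp_homeomorph e)⟩
  rw [← e.symm_apply_apply a] at h
  simpa [Function.comp_assoc] using h.comp_homeomorph e.symm

end Homeomorph

section Pi

variable {ι : Type*} [DecidableEq ι] {X : ι → Type*}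

lemma sum_apply_update [Fintype ι] (f : ∀ i, X i → EReal) (y : ∀ i, X i) (i : ι) (t : X i) :
    ∑ j, f j (Function.update y i t j) = f i t + ∑ j ∈ univ.erase i, f j (y j) := by
  simp only [Function.apply_update f, sum_update_of_mem (mem_univ i), sdiff_singleton_eq_erase]

variable [∀ i, TopologicalSpace (X i)]

lemma tendsto_update_nhds (y : ∀ i, X i) (i : ι) :
    Tendsto (Function.update y i) (𝓝 (y i)) (𝓝 y) := by
  simpa using ((continuous_const (y := y)).update i continuous_id).tendsto (y i)

variable [Fintype ι] {f : ∀ i, X i → EReal}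

theorem isLocalMinimizer_sum_iff (hf : ∀ i x, f i x ≠ ⊥) (y : ∀ i, X i) :
    IsLocalMinimizer (fun z => ∑ i, f i (z i)) y ↔ ∀ i, IsLocalMinimizer (f i) (y i) := by
  constructor
  · rintro ⟨hfin, hmin⟩ i
    have hfin_j : ∀ j, f j (y j) ≠ ⊤ := fun j =>
      EReal.ne_top_of_sum_ne_top (fun j _ => hf j _) hfin (mem_univ j)
    obtain ⟨r, hr⟩ : ∃ r : ℝ, ∑ j ∈ univ.erase i, f j (y j) = r :=
      ⟨_, (EReal.coe_toReal (EReal.sum_ne_top fun j _ => hfin_j j)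
        (EReal.sum_ne_bot fun j _ => hf j _)).symm⟩
    refine ⟨hfin_j i, ?_⟩
    filter_upwards [(tendsto_update_nhds y i).eventually hmin] with t ht
    rw [← add_sum_erase _ _ (mem_univ i), sum_apply_update, hr] at ht
    exact (EReal.addLECancellable_coe _).add_le_add_iff_right.1 ht
  · intro h
    refine ⟨EReal.sum_ne_top fun i _ => (h i).1, ?_⟩
    filter_upwards [eventually_all.2 fun i => (continuous_apply i).continuousAt.eventually (h i).2]
      with z hz
    exact sum_le_sum fun i _ => hz i

theorem isIsolatedLocalMinimizer_sum_iff (hf : ∀ i x, f i x ≠ ⊥) (y : ∀ i, X i) :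
    IsIsolatedLocalMinimizer (fun z => ∑ i, f i (z i)) y ↔
      ∀ i, IsIsolatedLocalMinimizer (f i) (y i) := by
  simp only [IsIsolatedLocalMinimizer, isLocalMinimizer_sum_iff hf]
  constructor
  · rintro ⟨hmin, U, hU, huniq⟩ i
    refine ⟨hmin i, Function.update y i ⁻¹' U, tendsto_update_nhds y i hU, fun t ht hmin_t => ?_⟩
    have hmin_update : ∀ j, IsLocalMinimizer (f j) (Function.update y i t j) := by
      intro j
      rcases eq_or_ne j i with rfl | hj
      · simpa using hmin_t
      · simpa [hj] using hmin j
    simpa using congrFun (huniq _ ht hmin_update) i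
  · intro h
    choose U hU huniq using fun i => (h i).2
    exact ⟨fun i => (h i).1, Set.univ.pi U, set_pi_mem_nhds Set.finite_univ fun i _ => hU i,
      fun z hz hmin_z => funext fun i => huniq i (z i) (hz i (Set.mem_univ i)) (hmin_z i)⟩

end Pi

/-- A separable proper function has an isolated local minimizer at `x` iff each coordinate
function has an isolated local minimizer at the corresponding coordinate. -/
theorem separable_isolatedLocalMin_iff {N : ℕ} (fn : Fin N → ℝ → EReal)
    (hproper : ∀ n, ProperFun (fn n))
    (x : EuclideanSpace ℝ (Fin N)) :
    IsIsolatedLocalMinimizer (fun y : EuclideanSpace ℝ (Fin N) => ∑ n, fn n (y n)) x ↔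
      ∀ n, IsIsolatedLocalMinimizer (fn n) (x n) :=
  (PiLp.homeomorph 2 fun _ : Fin N => ℝ).isIsolatedLocalMinimizer_comp_iff.trans
    (isIsolatedLocalMinimizer_sum_iff (fun n => (hproper n).1) _)
end

section
/- Let ω > 0 be a positive weight vector in ℝ^N and b > 0. Then the GME of the weighted ℓ¹-norm ‖·‖_{ω;1} with matrix B = b·I_N separates coordinatewise: (‖·‖_{ω;1})_{bI}(x) = Σ_{n=1}^N ω_n · MC_{b²/ω_n}(x_n), where MC_γ denotes the minimax concave penalty with parameter γ. -/
/-- The minimax concave penalty with parameter `γ`. -/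
noncomputable def MC (γ : ℝ) (t : ℝ) : ℝ :=
  if |t| ≤ 1 / γ then |t| - γ / 2 * t ^ 2 else 1 / (2 * γ)

lemma one_dim (ω b x : ℝ) (hω : 0 < ω) (hb : 0 < b) :
    IsLeast (Set.range fun t : ℝ => ω * |t| + b ^ 2 * (x - t) ^ 2 / 2)
      (ω * |x| - ω * MC (b ^ 2 / ω) x) := by
  have hb2 : (0:ℝ) < b ^ 2 := by positivity
  have hγ : 1 / (b ^ 2 / ω) = ω / b ^ 2 := by
    rw [one_div_div]
  unfold MC
  rw [hγ]
  by_cases h : |x| ≤ ω / b ^ 2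
  · rw [if_pos h]
    have hxb : |x| * b ^ 2 ≤ ω := (le_div_iff₀ hb2).mp h
    have hval : ω * |x| - ω * (|x| - b ^ 2 / ω / 2 * x ^ 2) = b ^ 2 * x ^ 2 / 2 := by
      field_simp; ring
    rw [hval]
    constructor
    · exact ⟨0, by simp⟩
    · rintro y ⟨t, rfl⟩
      have h1 : x * t ≤ |x| * |t| := (le_abs_self _).trans (abs_mul x t).le
      have h2 : (0:ℝ) ≤ |t| := abs_nonneg t
      nlinarith [sq_nonneg t, mul_nonneg (mul_nonneg hb2.le (sq_nonneg t)) h2]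
  · rw [if_neg h]
    push_neg at h
    have hval : ω * |x| - ω * (1 / (2 * (b ^ 2 / ω))) = ω * |x| - ω ^ 2 / (2 * b ^ 2) := by
      field_simp
    rw [hval]
    constructor
    · rcases le_or_gt 0 x with hx | hx
      · have hx' : ω / b ^ 2 < x := by rwa [abs_of_nonneg hx] at h
        refine ⟨x - ω / b ^ 2, ?_⟩
        have ht : (0:ℝ) < x - ω / b ^ 2 := by linarith [div_pos hω hb2]
        show ω * |x - ω / b ^ 2| + b ^ 2 * (x - (x - ω / b ^ 2)) ^ 2 / 2 = _
        rw [abs_of_pos ht, abs_of_nonneg hx]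
        field_simp
        ring
      · have hx' : ω / b ^ 2 < -x := by rwa [abs_of_neg hx] at h
        refine ⟨x + ω / b ^ 2, ?_⟩
        have ht : x + ω / b ^ 2 < 0 := by linarith
        show ω * |x + ω / b ^ 2| + b ^ 2 * (x - (x + ω / b ^ 2)) ^ 2 / 2 = _
        rw [abs_of_neg ht, abs_of_neg hx]
        field_simp
        ring
    · rintro y ⟨t, rfl⟩
      show _ ≤ ω * |t| + b ^ 2 * (x - t) ^ 2 / 2
      rcases le_or_gt 0 x with hx | hx
      · rw [abs_of_nonneg hx]
        have h1 : t ≤ |t| := le_abs_self t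
        have h2 : (0:ℝ) < 2 * b ^ 2 := by positivity
        rw [sub_le_iff_le_add]
        have h3 : (0:ℝ) ≤ (b ^ 2 * (x - t) - ω) ^ 2 / (2 * b ^ 2) := by positivity
        have h4 : (b ^ 2 * (x - t) - ω) ^ 2 / (2 * b ^ 2) =
            b ^ 2 * (x - t) ^ 2 / 2 + ω ^ 2 / (2 * b ^ 2) - ω * (x - t) := by
          field_simp; ring
        have h5 : ω * t ≤ ω * |t| := mul_le_mul_of_nonneg_left h1 hω.le
        linarith
      · rw [abs_of_neg hx]
        have h1 : -t ≤ |t| := neg_le_abs t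
        have h2 : (0:ℝ) < 2 * b ^ 2 := by positivity
        rw [sub_le_iff_le_add]
        have h3 : (0:ℝ) ≤ (b ^ 2 * (x - t) + ω) ^ 2 / (2 * b ^ 2) := by positivity
        have h4 : (b ^ 2 * (x - t) + ω) ^ 2 / (2 * b ^ 2) =
            b ^ 2 * (x - t) ^ 2 / 2 + ω ^ 2 / (2 * b ^ 2) + ω * (x - t) := by
          field_simp; ring
        have h5 : ω * -t ≤ ω * |t| := mul_le_mul_of_nonneg_left h1 hω.le
        linarith

/-- The GME of the weighted ℓ¹-norm with matrix `B = b·I` separates coordinatewise into a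
sum of MCP functions. -/
theorem gme_weighted_l1_separates {N : ℕ} (ω : Fin N → ℝ) (hω : ∀ n, 0 < ω n)
    (b : ℝ) (hb : 0 < b) (x : EuclideanSpace ℝ (Fin N)) :
    (∑ n, ω n * |x n|) -
        (⨅ v : EuclideanSpace ℝ (Fin N), ((∑ n, ω n * |v n|) + ‖b • (x - v)‖ ^ 2 / 2)) =
      ∑ n, ω n * MC (b ^ 2 / ω n) (x n) := by
  have key : ∀ v : EuclideanSpace ℝ (Fin N),
      (∑ n, ω n * |v n|) + ‖b • (x - v)‖ ^ 2 / 2 =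
        ∑ n, (ω n * |v n| + b ^ 2 * (x n - v n) ^ 2 / 2) := by
    intro v
    have hnorm : ‖b • (x - v)‖ ^ 2 = ∑ n, b ^ 2 * (x n - v n) ^ 2 := by
      rw [EuclideanSpace.norm_eq, Real.sq_sqrt (by positivity)]
      refine Finset.sum_congr rfl fun n _ => ?_
      simp only [PiLp.smul_apply, PiLp.sub_apply, smul_eq_mul, Real.norm_eq_abs, sq_abs]
      ring
    rw [hnorm, Finset.sum_add_distrib, Finset.sum_div]
  have hls : ∀ n, IsLeast (Set.range fun t : ℝ => ω n * |t| + b ^ 2 * (x n - t) ^ 2 / 2)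
      (ω n * |x n| - ω n * MC (b ^ 2 / ω n) (x n)) := fun n => one_dim (ω n) b (x n) (hω n) hb
  choose tmin htmin using fun n => (hls n).1
  have hinf : (⨅ v : EuclideanSpace ℝ (Fin N), ((∑ n, ω n * |v n|) + ‖b • (x - v)‖ ^ 2 / 2)) =
      ∑ n, (ω n * |x n| - ω n * MC (b ^ 2 / ω n) (x n)) := by
    refine le_antisymm ?_ ?_
    · have : (∑ n, ω n * |((WithLp.equiv 2 _).symm tmin : EuclideanSpace ℝ (Fin N)) n|) +
          ‖b • (x - ((WithLp.equiv 2 _).symm tmin : EuclideanSpace ℝ (Fin N)))‖ ^ 2 / 2 =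
          ∑ n, (ω n * |x n| - ω n * MC (b ^ 2 / ω n) (x n)) := by
        rw [key]
        exact Finset.sum_congr rfl fun n _ => htmin n
      exact this ▸ ciInf_le ⟨∑ n, (ω n * |x n| - ω n * MC (b ^ 2 / ω n) (x n)),
        by rintro y ⟨v, rfl⟩
           show ∑ n, (ω n * |x n| - ω n * MC (b ^ 2 / ω n) (x n)) ≤
             (∑ n, ω n * |v n|) + ‖b • (x - v)‖ ^ 2 / 2
           rw [key]
           exact Finset.sum_le_sum fun n _ => (hls n).2 ⟨v n, rfl⟩⟩ _
    · refine le_ciInf fun v => ?_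
      show ∑ n, (ω n * |x n| - ω n * MC (b ^ 2 / ω n) (x n)) ≤
        (∑ n, ω n * |v n|) + ‖b • (x - v)‖ ^ 2 / 2
      rw [key]
      exact Finset.sum_le_sum fun n _ => (hls n).2 ⟨v n, rfl⟩
  rw [hinf, ← Finset.sum_sub_distrib]
  refine Finset.sum_congr rfl fun n _ => ?_
  ring
end

section
/- Fix a finite alphabet 𝔄 = {a⁽¹⁾,…,a⁽ᴸ⁾} ⊂ ℝ with minimal gap d_min := min{|a−a'| : a,a' ∈ 𝔄, a ≠ a'} > 0, weights ω⁽ˡ⁾ ∈ ℝ₊₊^N with Σ_l ω⁽ˡ⁾_n = 1 for each n, and ω_max := max_{l,n} ω⁽ˡ⁾_n. If b > √(2ω_max/d_min), then the set of all isolated local minimizers of Θ(x) := Σ_{l=1}^L (‖·‖_{ω⁽ˡ⁾;1})_{bI}(x − a⁽ˡ⁾1_N) is exactly 𝔄^N. -/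
/-!
Minimizing over `v` coordinate by coordinate, the Moreau envelope of `w |· - c|` is a Huber
function, so `Θ(x) = Σ_n θ_n(x_n)` with `θ_n(t) = Σ_l ω_ln · MC(t - a_l)`; and the isolated local
minimizers of a separable function are exactly the points whose coordinates are isolated local
minimizers of the summands. Each MCP term rises strictly on `|t - a_l| ≤ ω_ln / b²` and is constant
beyond, and the bound on `b` gives `ω_ln / b² < d_min / 2`, so these windows are disjoint. Inside a
window `θ_n` decreases strictly towards `a_l`, so `a_l` is its only local minimizer there (and a
strict one); outside all windows `θ_n` is locally constant, so no point there is an isolated local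
minimizer.
-/

open Filter Topology

/-- `a` is an isolated local minimizer of the real-valued function `f`. -/
def IsIsolatedLocalMin {α : Type*} [TopologicalSpace α] (f : α → ℝ) (a : α) : Prop :=
  IsLocalMin f a ∧ ∃ U ∈ nhds a, ∀ y ∈ U, IsLocalMin f y → y = a

open Finset

section IsolatedLocalMin

variable {α β : Type*} [TopologicalSpace α] [TopologicalSpace β]

theorem isIsolatedLocalMin_iff_eventually {f : α → ℝ} {a : α} :
    IsIsolatedLocalMin f a ↔ IsLocalMin f a ∧ ∀ᶠ y in 𝓝 a, IsLocalMin f y → y = a := by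
  rw [IsIsolatedLocalMin, eventually_iff_exists_mem]

theorem not_isIsolatedLocalMin_of_eventually_eq {f : α → ℝ} {a : α} [(𝓝[≠] a).NeBot] {c : ℝ}
    (h : ∀ᶠ y in 𝓝 a, f y = c) : ¬ IsIsolatedLocalMin f a := by
  rw [isIsolatedLocalMin_iff_eventually]
  rintro ⟨-, hiso⟩
  have hloc : ∀ᶠ y in 𝓝 a, IsLocalMin f y :=
    h.eventually_nhds.mono fun y hy => hy.mono fun z hz => (hy.self_of_nhds.trans hz.symm).le
  obtain ⟨y, ⟨hyiso, hymin⟩, hya⟩ :=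
    (((hiso.and hloc).filter_mono nhdsWithin_le_nhds).and
      (self_mem_nhdsWithin : {a}ᶜ ∈ 𝓝[≠] a)).exists
  exact hya (hyiso hymin)

theorem isLocalMin_comp_homeomorph (e : α ≃ₜ β) {f : β → ℝ} {x : α} :
    IsLocalMin (f ∘ e) x ↔ IsLocalMin f (e x) := by
  rw [IsLocalMin, IsMinFilter, IsLocalMin, IsMinFilter, ← e.map_nhds_eq, eventually_map]
  rfl

theorem isIsolatedLocalMin_comp_homeomorph (e : α ≃ₜ β) {f : β → ℝ} {x : α} :
    IsIsolatedLocalMin (f ∘ e) x ↔ IsIsolatedLocalMin f (e x) := by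
  simp only [isIsolatedLocalMin_iff_eventually, isLocalMin_comp_homeomorph, ← e.map_nhds_eq,
    eventually_map, e.injective.eq_iff]

end IsolatedLocalMin

section Separable

variable {ι : Type*} [Fintype ι] {X : ι → Type*} (f : ∀ i, X i → ℝ)

section Topology

variable [∀ i, TopologicalSpace (X i)]

theorem isLocalMin_sum_apply_iff {x : ∀ i, X i} :
    IsLocalMin (fun y => ∑ i, f i (y i)) x ↔ ∀ i, IsLocalMin (f i) (x i) := by
  classical
  refine ⟨fun h i => ?_, fun h => ?_⟩
  · have hcont : Continuous (Function.update x i) := continuous_const.update i continuous_id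
    have hline : IsLocalMin ((fun y => ∑ j, f j (y j)) ∘ Function.update x i) (x i) :=
      IsLocalMin.comp_continuous (by rwa [Function.update_eq_self]) hcont.continuousAt
    simp only [Function.comp_def, Function.apply_update f, sum_update_of_mem (mem_univ i)] at hline
    exact hline.mono fun t => le_of_add_le_add_right
  · have hcoord : ∀ᶠ y in 𝓝 x, ∀ i, f i (x i) ≤ f i (y i) :=
      eventually_all.2 fun i => ((continuous_apply i).tendsto x).eventually (h i)
    exact hcoord.mono fun y hy => sum_le_sum fun i _ => hy i

theorem isIsolatedLocalMin_sum_apply_iff {x : ∀ i, X i} :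
    IsIsolatedLocalMin (fun y => ∑ i, f i (y i)) x ↔ ∀ i, IsIsolatedLocalMin (f i) (x i) := by
  classical
  simp only [isIsolatedLocalMin_iff_eventually, isLocalMin_sum_apply_iff]
  refine ⟨fun ⟨hmin, hiso⟩ i => ⟨hmin i, ?_⟩, fun h => ⟨fun i => (h i).1, ?_⟩⟩
  · have hcont : Continuous (Function.update x i) := continuous_const.update i continuous_id
    have hline : Tendsto (Function.update x i) (𝓝 (x i)) (𝓝 x) := by
      simpa using hcont.tendsto (x i)
    refine (hline.eventually hiso).mono fun t ht htmin => ?_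
    have hupd : Function.update x i t = x := ht fun j => by
      rcases eq_or_ne j i with rfl | hj
      · simpa using htmin
      · simpa [hj] using hmin j
    simpa using congrFun hupd i
  · have hcoord : ∀ᶠ y in 𝓝 x, ∀ i, IsLocalMin (f i) (y i) → y i = x i :=
      eventually_all.2 fun i => ((continuous_apply i).tendsto x).eventually (h i).2
    exact hcoord.mono fun y hy hymin => funext fun i => hy i (hymin i)

theorem PiLp.isIsolatedLocalMin_sum_apply_iff (p : ENNReal) {x : PiLp p X} :
    IsIsolatedLocalMin (fun y : PiLp p X => ∑ i, f i (y i)) x ↔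
      ∀ i, IsIsolatedLocalMin (f i) (x i) :=
  (isIsolatedLocalMin_comp_homeomorph (PiLp.homeomorph p X)).trans
    (_root_.isIsolatedLocalMin_sum_apply_iff f)

end Topology

theorem PiLp.isLeast_range_sum_apply (p : ENNReal) {m : ι → ℝ}
    (h : ∀ i, IsLeast (Set.range (f i)) (m i)) :
    IsLeast (Set.range fun v : PiLp p X => ∑ i, f i (v i)) (∑ i, m i) := by
  choose s hs using fun i => (h i).1
  refine ⟨⟨WithLp.toLp p s, by simp [hs]⟩, ?_⟩
  rintro _ ⟨v, rfl⟩
  exact sum_le_sum fun i _ => (h i).2 ⟨v i, rfl⟩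

end Separable

section Huber

variable {w b : ℝ}

noncomputable def huber (w b t : ℝ) : ℝ :=
  if |t| ≤ w / b ^ 2 then b ^ 2 * t ^ 2 / 2 else w * |t| - w ^ 2 / (2 * b ^ 2)

theorem huber_le_abs_add_sq (hw : 0 ≤ w) (hb : b ≠ 0) (t s : ℝ) :
    huber w b t ≤ w * |s| + b ^ 2 * (t - s) ^ 2 / 2 := by
  have hb2 : 0 < b ^ 2 := by positivity
  unfold huber
  split_ifs with ht
  · have hts : b ^ 2 * (t * s) ≤ w * |s| := calc
      b ^ 2 * (t * s) ≤ b ^ 2 * (|t| * |s|) := by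
        rw [← abs_mul]; exact mul_le_mul_of_nonneg_left (le_abs_self _) hb2.le
      _ ≤ w * |s| := by rw [← mul_assoc]; gcongr; rwa [le_div_iff₀' hb2] at ht
    nlinarith [sq_nonneg s]
  · -- AM-GM: `w u ≤ b² u² / 2 + w² / (2 b²)` with `u = |t - s|`
    have hamgm : w * |t - s| - w ^ 2 / (2 * b ^ 2) ≤ b ^ 2 * (t - s) ^ 2 / 2 := by
      have hsq : 0 ≤ (b ^ 2 * |t - s| - w) ^ 2 / (2 * b ^ 2) := by positivity
      have hexp : (b ^ 2 * |t - s| - w) ^ 2 / (2 * b ^ 2)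
          = b ^ 2 * (t - s) ^ 2 / 2 - (w * |t - s| - w ^ 2 / (2 * b ^ 2)) := by
        rw [← sq_abs (t - s)]; field_simp; ring
      linarith
    nlinarith [abs_sub_abs_le_abs_sub t s]

theorem exists_abs_add_sq_eq_huber (hb : b ≠ 0) (t : ℝ) :
    ∃ s, w * |s| + b ^ 2 * (t - s) ^ 2 / 2 = huber w b t := by
  unfold huber
  split_ifs with ht
  · exact ⟨0, by simp⟩
  rcases le_or_gt 0 t with ht0 | ht0
  · refine ⟨t - w / b ^ 2, ?_⟩
    rw [abs_of_nonneg ht0] at ht ⊢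
    rw [abs_of_nonneg (by linarith)]
    field_simp
    ring
  · refine ⟨t + w / b ^ 2, ?_⟩
    rw [abs_of_neg ht0] at ht ⊢
    rw [abs_of_nonpos (by linarith)]
    field_simp
    ring

/-- `huber w b (t - c)` is the Moreau envelope of `w |· - c|` at `t`. -/
theorem isLeast_huber (hw : 0 ≤ w) (hb : b ≠ 0) (c t : ℝ) :
    IsLeast (Set.range fun s => w * |s - c| + b ^ 2 * (t - s) ^ 2 / 2) (huber w b (t - c)) := by
  refine ⟨?_, ?_⟩
  · obtain ⟨s, hs⟩ := exists_abs_add_sq_eq_huber hb (t - c)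
    exact ⟨s + c, by rw [← hs]; ring_nf⟩
  · rintro _ ⟨s, rfl⟩
    simpa using huber_le_abs_add_sq hw hb (t - c) (s - c)

theorem ciInf_sum_abs_add_norm_sq {ι : Type*} [Fintype ι] {w : ι → ℝ} (hw : ∀ i, 0 ≤ w i)
    (hb : b ≠ 0) (c : ℝ) (x : EuclideanSpace ℝ ι) :
    ⨅ v : EuclideanSpace ℝ ι, ((∑ i, w i * |v i - c|) + ‖b • (x - v)‖ ^ 2 / 2) =
      ∑ i, huber (w i) b (x i - c) := by
  have hsplit : ∀ v : EuclideanSpace ℝ ι, (∑ i, w i * |v i - c|) + ‖b • (x - v)‖ ^ 2 / 2 =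
      ∑ i, (w i * |v i - c| + b ^ 2 * (x i - v i) ^ 2 / 2) := fun v => by
    simp only [EuclideanSpace.norm_sq_eq, PiLp.smul_apply, PiLp.sub_apply, smul_eq_mul,
      Real.norm_eq_abs, sq_abs, mul_pow, sum_add_distrib, sum_div]
  simp only [hsplit]
  exact (PiLp.isLeast_range_sum_apply _ 2 fun i => isLeast_huber (hw i) hb c (x i)).csInf_eq

end Huber

/-- The scaled minimax concave penalty `ω · MC_{b²/ω}` of the paper, with threshold `w / b²`. -/
noncomputable def mcp (w b t : ℝ) : ℝ := w * |t| - huber w b t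

section MCP

variable {w b s t : ℝ}

theorem mcp_of_abs_le (ht : |t| ≤ w / b ^ 2) : mcp w b t = w * |t| - b ^ 2 * t ^ 2 / 2 := by
  rw [mcp, huber, if_pos ht]

theorem mcp_of_le_abs (hb : b ≠ 0) (ht : w / b ^ 2 ≤ |t|) : mcp w b t = w ^ 2 / (2 * b ^ 2) := by
  rcases ht.eq_or_lt with heq | hlt
  · rw [mcp_of_abs_le heq.ge, ← sq_abs t, ← heq]
    field_simp
    ring
  · rw [mcp, huber, if_neg hlt.not_ge]
    ring

theorem mcp_lt_mcp (hb : b ≠ 0) (hst : |s| < |t|) (ht : |t| ≤ w / b ^ 2) :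
    mcp w b s < mcp w b t := by
  have hb2 : 0 < b ^ 2 := by positivity
  have hwt : b ^ 2 * |t| ≤ w := (le_div_iff₀' hb2).1 ht
  have hslope : 0 < w - b ^ 2 * (|t| + |s|) / 2 := by nlinarith
  rw [mcp_of_abs_le ht, mcp_of_abs_le (hst.le.trans ht), ← sq_abs s, ← sq_abs t]
  nlinarith [mul_pos (sub_pos.2 hst) hslope]

end MCP

noncomputable def mcpSum {ι : Type*} [Fintype ι] (a w : ι → ℝ) (b t : ℝ) : ℝ :=
  ∑ l, mcp (w l) b (t - a l)

section MCPSum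

variable {ι : Type*} [Fintype ι] {a w : ι → ℝ} {b : ℝ}

theorem mcpSum_eventually_eq_of_lt_abs (hb : b ≠ 0) {t : ℝ} (ht : ∀ l, w l / b ^ 2 < |t - a l|) :
    ∀ᶠ s in 𝓝 t, mcpSum a w b s = ∑ l, w l ^ 2 / (2 * b ^ 2) := by
  have hfar : ∀ᶠ s in 𝓝 t, ∀ l, w l / b ^ 2 < |s - a l| := eventually_all.2 fun l =>
    continuousAt_const.eventually_lt (by fun_prop) (ht l)
  exact hfar.mono fun s hs => sum_congr rfl fun l _ => mcp_of_le_abs hb (hs l).le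

variable (hb : b ≠ 0) (hsep : ∀ l l', l ≠ l' → w l / b ^ 2 + w l' / b ^ 2 ≤ |a l - a l'|)
include hb hsep

theorem mcpSum_lt_mcpSum {l : ι} {s t : ℝ} (hst : |s - a l| < |t - a l|)
    (ht : |t - a l| ≤ w l / b ^ 2) : mcpSum a w b s < mcpSum a w b t := by
  have hplateau : ∀ u, |u - a l| ≤ w l / b ^ 2 → ∀ l' ≠ l,
      mcp (w l') b (u - a l') = w l' ^ 2 / (2 * b ^ 2) := fun u hu l' hl' => by
    refine mcp_of_le_abs hb ?_
    have hll' := hsep l l' hl'.symm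
    have htri := abs_sub_le (a l) u (a l')
    rw [abs_sub_comm (a l) u] at htri
    linarith
  refine sum_lt_sum (fun l' _ => ?_) ⟨l, mem_univ l, mcp_lt_mcp hb hst ht⟩
  rcases eq_or_ne l' l with rfl | hl'
  · exact (mcp_lt_mcp hb hst ht).le
  · rw [hplateau s (hst.le.trans ht) l' hl', hplateau t ht l' hl']

theorem not_isLocalMin_mcpSum {l : ι} {t : ℝ} (hne : t ≠ a l) (ht : |t - a l| ≤ w l / b ^ 2) :
    ¬ IsLocalMin (mcpSum a w b) t := by
  intro hmin
  set g : ℝ → ℝ := fun μ => a l + μ * (t - a l)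
  have hg1 : g 1 = t := by simp [g]
  have hgmin : IsMinFilter (mcpSum a w b ∘ g) (𝓝[<] 1) 1 :=
    ((hg1 ▸ hmin).comp_continuous (by fun_prop : Continuous g).continuousAt).filter_mono
      nhdsWithin_le_nhds
  obtain ⟨μ, hμmin, hμ0, hμ1⟩ := (hgmin.and (Ioo_mem_nhdsLT zero_lt_one)).exists
  have hpos : 0 < |t - a l| := abs_pos.2 (sub_ne_zero.2 hne)
  have hcloser : |g μ - a l| < |t - a l| := by
    simp only [g, add_sub_cancel_left, abs_mul, abs_of_pos hμ0]
    nlinarith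
  have := mcpSum_lt_mcpSum hb hsep hcloser ht
  simp only [Function.comp_apply, hg1] at hμmin
  linarith

theorem isIsolatedLocalMin_mcpSum_iff (hw : ∀ l, 0 < w l) {t : ℝ} :
    IsIsolatedLocalMin (mcpSum a w b) t ↔ ∃ l, t = a l := by
  constructor
  · intro hiso
    by_contra! hne
    by_cases hnear : ∃ l, |t - a l| ≤ w l / b ^ 2
    · obtain ⟨l, hl⟩ := hnear
      exact not_isLocalMin_mcpSum hb hsep (hne l) hl hiso.1
    · push Not at hnear
      exact not_isIsolatedLocalMin_of_eventually_eq (mcpSum_eventually_eq_of_lt_abs hb hnear) hiso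
  · rintro ⟨l, rfl⟩
    have hnear : ∀ᶠ s in 𝓝 (a l), |s - a l| < w l / b ^ 2 :=
      Metric.ball_mem_nhds _ (div_pos (hw l) (by positivity))
    refine isIsolatedLocalMin_iff_eventually.2
      ⟨hnear.mono fun s hs => ?_, hnear.mono fun s hs hmin => ?_⟩
    · rcases eq_or_ne s (a l) with rfl | hne
      · exact le_rfl
      · refine (mcpSum_lt_mcpSum hb hsep ?_ hs.le).le
        simpa [sub_eq_zero] using hne
    · by_contra hne
      exact not_isLocalMin_mcpSum hb hsep hne hs.le hmin

end MCPSum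

theorem sum_sub_ciInf_eq_sum_mcpSum {ι κ : Type*} [Fintype ι] [Fintype κ] (a : ι → ℝ)
    {ω : ι → κ → ℝ} (hω : ∀ l n, 0 ≤ ω l n) {b : ℝ} (hb : b ≠ 0) (x : EuclideanSpace ℝ κ) :
    ∑ l, ((∑ n, ω l n * |x n - a l|) -
      ⨅ v : EuclideanSpace ℝ κ, ((∑ n, ω l n * |v n - a l|) + ‖b • (x - v)‖ ^ 2 / 2)) =
      ∑ n, mcpSum a (fun l => ω l n) b (x n) := by
  calc _ = ∑ l, ∑ n, mcp (ω l n) b (x n - a l) := sum_congr rfl fun l _ => by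
        rw [ciInf_sum_abs_add_norm_sq (hω l) hb, ← sum_sub_distrib]; rfl
    _ = _ := sum_comm

theorem isolated_minimizers_of_Theta_general {N L : ℕ} (a : Fin L → ℝ)
    (dmin : ℝ) (hdmin : IsLeast {d : ℝ | ∃ l l' : Fin L, l ≠ l' ∧ d = |a l - a l'|} dmin)
    (hdpos : 0 < dmin)
    (ω : Fin L → Fin N → ℝ) (hω : ∀ l n, 0 < ω l n)
    (ωmax : ℝ) (hωmax : IsGreatest {w : ℝ | ∃ l n, w = ω l n} ωmax)
    (b : ℝ) (hb : Real.sqrt (2 * ωmax / dmin) < b) :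
    {x : EuclideanSpace ℝ (Fin N) |
        IsIsolatedLocalMin
          (fun x : EuclideanSpace ℝ (Fin N) =>
            ∑ l, ((∑ n, ω l n * |x n - a l|) -
              ⨅ v : EuclideanSpace ℝ (Fin N),
                ((∑ n, ω l n * |v n - a l|) + ‖b • (x - v)‖ ^ 2 / 2))) x} =
      {x : EuclideanSpace ℝ (Fin N) | ∀ n, ∃ l, x n = a l} := by
  have hb0 : 0 < b := (Real.sqrt_nonneg _).trans_lt hb
  have hhalf : ∀ l n, ω l n / b ^ 2 < dmin / 2 := fun l n => by
    have hbsq := (Real.sqrt_lt' hb0).1 hb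
    rw [div_lt_iff₀ hdpos] at hbsq
    rw [div_lt_div_iff₀ (by positivity) two_pos]
    nlinarith [hωmax.2 ⟨l, n, rfl⟩]
  have hsep : ∀ n l l', l ≠ l' → ω l n / b ^ 2 + ω l' n / b ^ 2 ≤ |a l - a l'| :=
    fun n l l' hll' => by linarith [hhalf l n, hhalf l' n, hdmin.2 ⟨l, l', hll', rfl⟩]
  ext x
  simp only [Set.mem_ofPred_eq, sum_sub_ciInf_eq_sum_mcpSum a (fun l n => (hω l n).le) hb0.ne']
  rw [PiLp.isIsolatedLocalMin_sum_apply_iff]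
  exact forall_congr' fun n => isIsolatedLocalMin_mcpSum_iff hb0.ne' (hsep n) fun l => hω l n

/-- With `b > √(2 ω_max / d_min)`, the set of all isolated local minimizers of the
regularizer `Θ(x) = Σ_l (‖·‖_{ω⁽ˡ⁾;1})_{bI}(x − a⁽ˡ⁾ 1)` is exactly `𝔄^N`. -/
theorem isolated_minimizers_of_Theta {N L : ℕ} (a : Fin L → ℝ) (ha : Function.Injective a)
    (dmin : ℝ) (hdmin : IsLeast {d : ℝ | ∃ l l' : Fin L, l ≠ l' ∧ d = |a l - a l'|} dmin)
    (hdpos : 0 < dmin)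
    (ω : Fin L → Fin N → ℝ) (hω : ∀ l n, 0 < ω l n)
    (hsum : ∀ n, ∑ l, ω l n = 1)
    (ωmax : ℝ) (hωmax : IsGreatest {w : ℝ | ∃ l n, w = ω l n} ωmax)
    (b : ℝ) (hb : Real.sqrt (2 * ωmax / dmin) < b) :
    {x : EuclideanSpace ℝ (Fin N) |
        IsIsolatedLocalMin
          (fun x : EuclideanSpace ℝ (Fin N) =>
            ∑ l, ((∑ n, ω l n * |x n - a l|) -
              ⨅ v : EuclideanSpace ℝ (Fin N),
                ((∑ n, ω l n * |v n - a l|) + ‖b • (x - v)‖ ^ 2 / 2))) x} =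
      {x : EuclideanSpace ℝ (Fin N) | ∀ n, ∃ l, x n = a l} :=
  isolated_minimizers_of_Theta_general a dmin hdmin hdpos ω hω ωmax hωmax b hb
end

section
/- For a nonexpansive operator T : H → H on a finite-dimensional real Hilbert space with Fix(T) ≠ ∅, and relaxation parameters (α_k) ⊂ [0,1] satisfying Σ_k α_k(1−α_k) = ∞, the Krasnosel'skiĭ–Mann sequence x_{k+1} = (1−α_k)x_k + α_k T(x_k) converges to a point in Fix(T). -/
open Filter Topology

/-- `T` is nonexpansive. -/
def Nonexpansive {H : Type*} [NormedAddCommGroup H] (T : H → H) : Prop :=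
  ∀ x y : H, ‖T x - T y‖ ≤ ‖x - y‖

lemma combo_norm_sq {H : Type*} [NormedAddCommGroup H] [InnerProductSpace ℝ H]
    (a b : H) (t : ℝ) :
    ‖(1-t)•a + t•b‖^2 = (1-t)*‖a‖^2 + t*‖b‖^2 - t*(1-t)*‖b-a‖^2 := by
  simp only [← real_inner_self_eq_norm_sq, inner_add_add_self, inner_sub_sub_self,
    real_inner_smul_left, real_inner_smul_right]
  ring

/-- Krasnosel'skiĭ–Mann iteration: for a nonexpansive `T` with a fixed point and
relaxation parameters `α_k ∈ [0,1]` with `Σ α_k(1−α_k) = ∞`, the sequence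
`x_{k+1} = (1−α_k)x_k + α_k T(x_k)` converges to a fixed point of `T`. -/
theorem krasnoselskii_mann
    {H : Type*} [NormedAddCommGroup H] [InnerProductSpace ℝ H] [FiniteDimensional ℝ H]
    (T : H → H) (hT : Nonexpansive T) (hfix : ∃ u : H, T u = u)
    (α : ℕ → ℝ) (hα : ∀ k, α k ∈ Set.Icc (0 : ℝ) 1)
    (hdiv : ¬ Summable (fun k => α k * (1 - α k)))
    (x : ℕ → H) (hx : ∀ k, x (k + 1) = (1 - α k) • x k + α k • T (x k)) :
    ∃ p : H, T p = p ∧ Tendsto x atTop (𝓝 p) := by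
  obtain ⟨u, hu⟩ := hfix
  have hα0 : ∀ k, 0 ≤ α k := fun k => (hα k).1
  have hα1 : ∀ k, α k ≤ 1 := fun k => (hα k).2
  have hα1' : ∀ k, 0 ≤ 1 - α k := fun k => by linarith [hα1 k]
  -- decomposition of the step relative to any point z
  have hdec : ∀ z k, x (k+1) - z = (1 - α k) • (x k - z) + α k • (T (x k) - z) := by
    intro z k
    rw [hx k]
    module
  -- Fejér monotonicity with respect to any fixed point
  have fej : ∀ z, T z = z → ∀ k, ‖x (k+1) - z‖ ≤ ‖x k - z‖ := by
    intro z hz k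
    rw [hdec z k]
    calc ‖(1 - α k) • (x k - z) + α k • (T (x k) - z)‖
        ≤ ‖(1 - α k) • (x k - z)‖ + ‖α k • (T (x k) - z)‖ := norm_add_le _ _
      _ = (1 - α k) * ‖x k - z‖ + α k * ‖T (x k) - z‖ := by
          rw [norm_smul, norm_smul, Real.norm_of_nonneg (hα1' k), Real.norm_of_nonneg (hα0 k)]
      _ ≤ (1 - α k) * ‖x k - z‖ + α k * ‖x k - z‖ := by
          have : ‖T (x k) - z‖ ≤ ‖x k - z‖ := by
            have := hT (x k) z; rwa [hz] at this
          nlinarith [hα0 k]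
      _ = ‖x k - z‖ := by ring
  -- residual
  set r : ℕ → ℝ := fun k => ‖T (x k) - x k‖ with hr
  have hrnn : ∀ k, 0 ≤ r k := fun k => norm_nonneg _
  -- squared inequality
  have sq_ineq : ∀ k, ‖x (k+1) - u‖^2 ≤ ‖x k - u‖^2 - α k * (1 - α k) * r k ^ 2 := by
    intro k
    have h1 : ‖T (x k) - u‖ ≤ ‖x k - u‖ := by
      have := hT (x k) u; rwa [hu] at this
    have h2 : (T (x k) - u) - (x k - u) = T (x k) - x k := by abel
    rw [hdec u k, combo_norm_sq, h2]
    have h3 : ‖T (x k) - u‖^2 ≤ ‖x k - u‖^2 := by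
      nlinarith [norm_nonneg (T (x k) - u), norm_nonneg (x k - u)]
    nlinarith [hα0 k]
  -- partial sums bounded
  have psum : ∀ n, ∑ k ∈ Finset.range n, α k * (1 - α k) * r k ^ 2
      ≤ ‖x 0 - u‖^2 - ‖x n - u‖^2 := by
    intro n
    induction n with
    | zero => simp
    | succ n ih =>
      rw [Finset.sum_range_succ]
      have := sq_ineq n
      linarith
  have hS : Summable (fun k => α k * (1 - α k) * r k ^ 2) := by
    apply summable_of_sum_range_le (c := ‖x 0 - u‖^2)
      (fun k => mul_nonneg (mul_nonneg (hα0 k) (hα1' k)) (sq_nonneg _))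
    intro n
    have := psum n
    nlinarith [sq_nonneg ‖x n - u‖]
  -- residual is antitone
  have rant : Antitone r := by
    apply antitone_nat_of_succ_le
    intro k
    have hstep : x (k+1) - x k = α k • (T (x k) - x k) := by rw [hx k]; module
    have hstep2 : T (x k) - x (k+1) = (1 - α k) • (T (x k) - x k) := by rw [hx k]; module
    calc r (k+1) = ‖T (x (k+1)) - x (k+1)‖ := rfl
      _ ≤ ‖T (x (k+1)) - T (x k)‖ + ‖T (x k) - x (k+1)‖ := by
          have : T (x (k+1)) - x (k+1) = (T (x (k+1)) - T (x k)) + (T (x k) - x (k+1)) := by abel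
          rw [this]; exact norm_add_le _ _
      _ ≤ ‖x (k+1) - x k‖ + ‖T (x k) - x (k+1)‖ := by
          have := hT (x (k+1)) (x k); linarith
      _ = α k * r k + (1 - α k) * r k := by
          rw [hstep, hstep2, norm_smul, norm_smul,
            Real.norm_of_nonneg (hα0 k), Real.norm_of_nonneg (hα1' k)]
      _ = r k := by ring
  -- residual tends to 0
  have hbdd : BddBelow (Set.range r) := ⟨0, by rintro _ ⟨k, rfl⟩; exact hrnn k⟩
  have rlim : Tendsto r atTop (𝓝 (⨅ k, r k)) := tendsto_atTop_ciInf rant hbdd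
  have hL0 : (⨅ k, r k) = 0 := by
    have hge : 0 ≤ ⨅ k, r k := le_ciInf hrnn
    rcases eq_or_lt_of_le hge with h | h
    · exact h.symm
    · exfalso
      apply hdiv
      have hle : ∀ k, α k * (1 - α k) ≤ (⨅ k, r k)⁻¹ ^ 2 * (α k * (1 - α k) * r k ^ 2) := by
        intro k
        have h1 : (⨅ j, r j) ≤ r k := ciInf_le hbdd k
        have h2 : (⨅ j, r j)^2 ≤ r k ^ 2 := by nlinarith
        have h3 : 0 < (⨅ j, r j)^2 := by positivity
        rw [inv_pow]
        have hnn : 0 ≤ α k * (1 - α k) := by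
          have := hα0 k; have := hα1' k; positivity
        calc α k * (1 - α k) = ((⨅ j, r j)^2)⁻¹ * (α k * (1 - α k) * (⨅ j, r j)^2) := by
              field_simp
          _ ≤ ((⨅ j, r j)^2)⁻¹ * (α k * (1 - α k) * r k ^ 2) := by
              apply mul_le_mul_of_nonneg_left _ (by positivity)
              nlinarith [hnn, h2]
      exact Summable.of_nonneg_of_le
        (fun k => by have := hα0 k; have := hα1' k; positivity) hle (hS.mul_left _)
  rw [hL0] at rlim
  -- boundedness and convergent subsequence
  have dant : Antitone (fun k => ‖x k - u‖) := antitone_nat_of_succ_le (fej u hu)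
  have hball : ∀ k, x k ∈ Metric.closedBall u ‖x 0 - u‖ := by
    intro k
    rw [Metric.mem_closedBall, dist_eq_norm]
    exact dant (Nat.zero_le k)
  obtain ⟨p, -, φ, hφ, hxφ⟩ :=
    tendsto_subseq_of_bounded Metric.isBounded_closedBall hball
  -- p is a fixed point
  have hTcont : Continuous T := by
    apply LipschitzWith.continuous (K := 1)
    intro a b
    rw [edist_dist, edist_dist, dist_eq_norm, dist_eq_norm]
    simp only [ENNReal.coe_one, one_mul]
    exact ENNReal.ofReal_le_ofReal (hT a b)
  have h1 : Tendsto (fun j => T (x (φ j)) - x (φ j)) atTop (𝓝 (T p - p)) :=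
    ((hTcont.tendsto p).comp hxφ).sub hxφ
  have h2 : Tendsto (fun j => T (x (φ j)) - x (φ j)) atTop (𝓝 0) := by
    rw [tendsto_zero_iff_norm_tendsto_zero]
    exact rlim.comp hφ.tendsto_atTop
  have hTp : T p = p := by
    have := tendsto_nhds_unique h1 h2
    rwa [sub_eq_zero] at this
  refine ⟨p, hTp, ?_⟩
  -- whole sequence converges to p
  set d : ℕ → ℝ := fun k => ‖x k - p‖ with hd
  have dant' : Antitone d := antitone_nat_of_succ_le (fej p hTp)
  have hbdd' : BddBelow (Set.range d) := ⟨0, by rintro _ ⟨k, rfl⟩; exact norm_nonneg _⟩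
  have dlim : Tendsto d atTop (𝓝 (⨅ k, d k)) := tendsto_atTop_ciInf dant' hbdd'
  have dsub : Tendsto (fun j => d (φ j)) atTop (𝓝 0) := by
    have : Tendsto (fun j => x (φ j) - p) atTop (𝓝 0) := by
      simpa using hxφ.sub (tendsto_const_nhds (x := p))
    rw [tendsto_zero_iff_norm_tendsto_zero] at this
    exact this
  have : (⨅ k, d k) = 0 :=
    tendsto_nhds_unique (dlim.comp hφ.tendsto_atTop) dsub
  rw [this] at dlim
  rw [tendsto_iff_norm_sub_tendsto_zero]  -- may not exist; fallback below
  exact dlim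
end
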